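/- Define vol(u,v) piecewise for u∈[0,1]: vol = u^2 - v^2 - 8u - 2v + 10 if v∈[0,2-2u]; vol = 12 - 4v - 12u - v^2/2 + 2uv + 3u^2 if v∈[2-2u,2-u]; vol = (1/2)(4u+3v-8)^2 if v∈[2-u,(8-4u)/3]; and for u∈[1,2]: vol = 12 - 4v - 12u - v^2/2 + 2uv + 3u^2 if v∈[0,2-u]; vol = (1/2)(4u+3v-8)^2 if v∈[2-u,(8-4u)/3]; 0 otherwise. Then (3/22) ∫_0^2 ∫_0^∞ vol(u,v) dv du = 65/66. -/

import Mathlib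

open MeasureTheory intervalIntegral

noncomputable def vol18 (u v : ℝ) : ℝ :=
  if 0 ≤ u ∧ u ≤ 1 then
    (if 0 ≤ v ∧ v ≤ 2 - 2*u then u^2 - v^2 - 8*u - 2*v + 10
     else if 2 - 2*u ≤ v ∧ v ≤ 2 - u then 12 - 4*v - 12*u - v^2/2 + 2*u*v + 3*u^2
     else if 2 - u ≤ v ∧ v ≤ (8 - 4*u)/3 then (1/2)*(4*u + 3*v - 8)^2
     else 0)
  else if 1 ≤ u ∧ u ≤ 2 then
    (if 0 ≤ v ∧ v ≤ 2 - u then 12 - 4*v - 12*u - v^2/2 + 2*u*v + 3*u^2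
     else if 2 - u ≤ v ∧ v ≤ (8 - 4*u)/3 then (1/2)*(4*u + 3*v - 8)^2
     else 0)
  else 0

lemma ipoly18 (c0 c1 c2 c3 x y : ℝ) :
    ∫ t in x..y, (c0 + c1*t + c2*t^2 + c3*t^3)
      = (c0*y + c1/2*y^2 + c2/3*y^3 + c3/4*y^4)
        - (c0*x + c1/2*x^2 + c2/3*x^3 + c3/4*x^4) := by
  have h : ∀ t ∈ Set.uIcc x y,
      HasDerivAt (fun s => c0*s + c1/2*s^2 + c2/3*s^3 + c3/4*s^4)
        (c0 + c1*t + c2*t^2 + c3*t^3) t := by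
    intro t _
    have h1 : HasDerivAt (fun s : ℝ => c0*s) c0 t := by
      simpa using (hasDerivAt_id t).const_mul c0
    have h2 : HasDerivAt (fun s : ℝ => c1/2*s^2) (c1*t) t := by
      have := (hasDerivAt_pow 2 t).const_mul (c1/2)
      convert this using 1
      · rfl
      · rfl
      push_cast; ring
    have h3 : HasDerivAt (fun s : ℝ => c2/3*s^3) (c2*t^2) t := by
      have := (hasDerivAt_pow 3 t).const_mul (c2/3)
      convert this using 1
      · rfl
      · rfl
      push_cast; ring
    have h4 : HasDerivAt (fun s : ℝ => c3/4*s^4) (c3*t^3) t := by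
      have := (hasDerivAt_pow 4 t).const_mul (c3/4)
      convert this using 1
      · rfl
      · rfl
      push_cast; ring
    exact ((h1.add h2).add h3).add h4
  rw [intervalIntegral.integral_eq_sub_of_hasDerivAt h
    ((by fun_prop : Continuous fun t : ℝ => c0 + c1*t + c2*t^2 + c3*t^3).intervalIntegrable x y)]

lemma inner18_1 {u : ℝ} (h0 : 0 < u) (h1 : u < 1) :
    ∫ v in Set.Ioi (0:ℝ), vol18 u v = 124/9 - 56/3*u + 22/3*u^2 - 5/9*u^3 := by
  have hu : 0 ≤ u ∧ u ≤ 1 := ⟨h0.le, h1.le⟩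
  have h0a : (0:ℝ) ≤ 2 - 2*u := by linarith
  have hab : (2:ℝ) - 2*u ≤ 2 - u := by linarith
  have hbB : (2:ℝ) - u ≤ (8 - 4*u)/3 := by linarith
  have h0b : (0:ℝ) ≤ 2 - u := by linarith
  have h0B : (0:ℝ) ≤ (8 - 4*u)/3 := by linarith
  have hva : Set.EqOn (vol18 u) (fun v => u^2 - v^2 - 8*u - 2*v + 10)
      (Set.Ioc 0 (2 - 2*u)) := by
    intro v hv
    simp only [vol18, if_pos hu, if_pos (show 0 ≤ v ∧ v ≤ 2 - 2*u from ⟨hv.1.le, hv.2⟩)]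
  have hvb : Set.EqOn (vol18 u) (fun v => 12 - 4*v - 12*u - v^2/2 + 2*u*v + 3*u^2)
      (Set.Ioc (2 - 2*u) (2 - u)) := by
    intro v hv
    have hn1 : ¬ (0 ≤ v ∧ v ≤ 2 - 2*u) := fun h => absurd h.2 (not_le.2 hv.1)
    simp only [vol18, if_pos hu, if_neg hn1,
      if_pos (show 2 - 2*u ≤ v ∧ v ≤ 2 - u from ⟨hv.1.le, hv.2⟩)]
  have hvc : Set.EqOn (vol18 u) (fun v => (1/2)*(4*u + 3*v - 8)^2)
      (Set.Ioc (2 - u) ((8 - 4*u)/3)) := by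
    intro v hv
    have hn1 : ¬ (0 ≤ v ∧ v ≤ 2 - 2*u) := fun h => absurd h.2 (not_le.2 (lt_of_le_of_lt hab hv.1))
    have hn2 : ¬ (2 - 2*u ≤ v ∧ v ≤ 2 - u) := fun h => absurd h.2 (not_le.2 hv.1)
    simp only [vol18, if_pos hu, if_neg hn1, if_neg hn2,
      if_pos (show 2 - u ≤ v ∧ v ≤ (8 - 4*u)/3 from ⟨hv.1.le, hv.2⟩)]
  have hvd : Set.EqOn (vol18 u) (fun _ => (0:ℝ)) (Set.Ioi ((8 - 4*u)/3)) := by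
    intro v hv
    have hv' : (8 - 4*u)/3 < v := hv
    have hn1 : ¬ (0 ≤ v ∧ v ≤ 2 - 2*u) := fun h => absurd h.2 (by linarith)
    have hn2 : ¬ (2 - 2*u ≤ v ∧ v ≤ 2 - u) := fun h => absurd h.2 (by linarith)
    have hn3 : ¬ (2 - u ≤ v ∧ v ≤ (8 - 4*u)/3) := fun h => absurd h.2 (by linarith)
    simp only [vol18, if_pos hu, if_neg hn1, if_neg hn2, if_neg hn3]
  have j1 : IntegrableOn (vol18 u) (Set.Ioc 0 (2 - 2*u)) :=
    (((by fun_prop : Continuous fun v : ℝ => u^2 - v^2 - 8*u - 2*v + 10).integrableOn_Ioc).congr_fun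
      hva.symm measurableSet_Ioc)
  have j2 : IntegrableOn (vol18 u) (Set.Ioc (2 - 2*u) (2 - u)) :=
    (((by fun_prop : Continuous fun v : ℝ => 12 - 4*v - 12*u - v^2/2 + 2*u*v + 3*u^2).integrableOn_Ioc).congr_fun
      hvb.symm measurableSet_Ioc)
  have j3 : IntegrableOn (vol18 u) (Set.Ioc (2 - u) ((8 - 4*u)/3)) :=
    (((by fun_prop : Continuous fun v : ℝ => (1/2)*(4*u + 3*v - 8)^2).integrableOn_Ioc).congr_fun
      hvc.symm measurableSet_Ioc)
  have j4 : IntegrableOn (vol18 u) (Set.Ioi ((8 - 4*u)/3)) :=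
    (integrableOn_zero).congr_fun hvd.symm measurableSet_Ioi
  have hset1 : Set.Ioc (0:ℝ) (2 - u) = Set.Ioc 0 (2 - 2*u) ∪ Set.Ioc (2 - 2*u) (2 - u) :=
    (Set.Ioc_union_Ioc_eq_Ioc h0a hab).symm
  have hset2 : Set.Ioc (0:ℝ) ((8 - 4*u)/3) = Set.Ioc 0 (2 - u) ∪ Set.Ioc (2 - u) ((8 - 4*u)/3) :=
    (Set.Ioc_union_Ioc_eq_Ioc h0b hbB).symm
  have hset3 : Set.Ioi (0:ℝ) = Set.Ioc 0 ((8 - 4*u)/3) ∪ Set.Ioi ((8 - 4*u)/3) :=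
    (Set.Ioc_union_Ioi_eq_Ioi h0B).symm
  have d1 : Disjoint (Set.Ioc (0:ℝ) (2 - 2*u)) (Set.Ioc (2 - 2*u) (2 - u)) :=
    Set.disjoint_left.2 fun x hx1 hx2 => absurd hx1.2 (not_le.2 hx2.1)
  have d2 : Disjoint (Set.Ioc (0:ℝ) (2 - u)) (Set.Ioc (2 - u) ((8 - 4*u)/3)) :=
    Set.disjoint_left.2 fun x hx1 hx2 => absurd hx1.2 (not_le.2 hx2.1)
  have d3 : Disjoint (Set.Ioc (0:ℝ) ((8 - 4*u)/3)) (Set.Ioi ((8 - 4*u)/3)) :=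
    Set.disjoint_left.2 fun x hx1 hx2 => absurd hx1.2 (not_le.2 hx2)
  have jB : IntegrableOn (vol18 u) (Set.Ioc 0 ((8 - 4*u)/3)) := by
    rw [hset2, hset1]; exact (j1.union j2).union j3
  have jb : IntegrableOn (vol18 u) (Set.Ioc 0 (2 - u)) := by
    rw [hset1]; exact j1.union j2
  rw [hset3, setIntegral_union d3 measurableSet_Ioi jB j4,
    hset2, setIntegral_union d2 measurableSet_Ioc jb j3,
    hset1, setIntegral_union d1 measurableSet_Ioc j1 j2]
  rw [setIntegral_congr_fun measurableSet_Ioc hva,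
    setIntegral_congr_fun measurableSet_Ioc hvb,
    setIntegral_congr_fun measurableSet_Ioc hvc,
    setIntegral_congr_fun measurableSet_Ioi hvd]
  rw [← intervalIntegral.integral_of_le h0a, ← intervalIntegral.integral_of_le hab,
    ← intervalIntegral.integral_of_le hbB]
  have e1 : ∫ v in (0:ℝ)..(2 - 2*u), (u^2 - v^2 - 8*u - 2*v + 10)
      = ∫ v in (0:ℝ)..(2 - 2*u), ((u^2 - 8*u + 10) + (-2)*v + (-1)*v^2 + 0*v^3) :=
    intervalIntegral.integral_congr fun v _ => by ring
  have e2 : ∫ v in (2 - 2*u)..(2 - u), (12 - 4*v - 12*u - v^2/2 + 2*u*v + 3*u^2)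
      = ∫ v in (2 - 2*u)..(2 - u), ((12 - 12*u + 3*u^2) + (2*u - 4)*v + (-(1/2))*v^2 + 0*v^3) :=
    intervalIntegral.integral_congr fun v _ => by ring
  have e3 : ∫ v in (2 - u)..((8 - 4*u)/3), ((1/2)*(4*u + 3*v - 8)^2)
      = ∫ v in (2 - u)..((8 - 4*u)/3), ((8*u^2 - 32*u + 32) + (12*u - 24)*v + (9/2)*v^2 + 0*v^3) :=
    intervalIntegral.integral_congr fun v _ => by ring
  rw [e1, e2, e3, ipoly18, ipoly18, ipoly18, integral_zero]
  ring

lemma inner18_2 {u : ℝ} (h1 : 1 < u) (h2 : u ≤ 2) :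
    ∫ v in Set.Ioi (0:ℝ), vol18 u v = 136/9 - 68/3*u + 34/3*u^2 - 17/9*u^3 := by
  have hu0 : ¬ (0 ≤ u ∧ u ≤ 1) := fun h => absurd h.2 (not_le.2 h1)
  have hu : 1 ≤ u ∧ u ≤ 2 := ⟨h1.le, h2⟩
  have h0b : (0:ℝ) ≤ 2 - u := by linarith
  have hbB : (2:ℝ) - u ≤ (8 - 4*u)/3 := by linarith
  have h0B : (0:ℝ) ≤ (8 - 4*u)/3 := by linarith
  have hvb : Set.EqOn (vol18 u) (fun v => 12 - 4*v - 12*u - v^2/2 + 2*u*v + 3*u^2)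
      (Set.Ioc 0 (2 - u)) := by
    intro v hv
    simp only [vol18, if_neg hu0, if_pos hu,
      if_pos (show 0 ≤ v ∧ v ≤ 2 - u from ⟨hv.1.le, hv.2⟩)]
  have hvc : Set.EqOn (vol18 u) (fun v => (1/2)*(4*u + 3*v - 8)^2)
      (Set.Ioc (2 - u) ((8 - 4*u)/3)) := by
    intro v hv
    have hn1 : ¬ (0 ≤ v ∧ v ≤ 2 - u) := fun h => absurd h.2 (not_le.2 hv.1)
    simp only [vol18, if_neg hu0, if_pos hu, if_neg hn1,
      if_pos (show 2 - u ≤ v ∧ v ≤ (8 - 4*u)/3 from ⟨hv.1.le, hv.2⟩)]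
  have hvd : Set.EqOn (vol18 u) (fun _ => (0:ℝ)) (Set.Ioi ((8 - 4*u)/3)) := by
    intro v hv
    have hv' : (8 - 4*u)/3 < v := hv
    have hn1 : ¬ (0 ≤ v ∧ v ≤ 2 - u) := fun h => absurd h.2 (by linarith)
    have hn2 : ¬ (2 - u ≤ v ∧ v ≤ (8 - 4*u)/3) := fun h => absurd h.2 (by linarith)
    simp only [vol18, if_neg hu0, if_pos hu, if_neg hn1, if_neg hn2]
  have j2 : IntegrableOn (vol18 u) (Set.Ioc 0 (2 - u)) :=
    (((by fun_prop : Continuous fun v : ℝ => 12 - 4*v - 12*u - v^2/2 + 2*u*v + 3*u^2).integrableOn_Ioc).congr_fun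
      hvb.symm measurableSet_Ioc)
  have j3 : IntegrableOn (vol18 u) (Set.Ioc (2 - u) ((8 - 4*u)/3)) :=
    (((by fun_prop : Continuous fun v : ℝ => (1/2)*(4*u + 3*v - 8)^2).integrableOn_Ioc).congr_fun
      hvc.symm measurableSet_Ioc)
  have j4 : IntegrableOn (vol18 u) (Set.Ioi ((8 - 4*u)/3)) :=
    (integrableOn_zero).congr_fun hvd.symm measurableSet_Ioi
  have hset2 : Set.Ioc (0:ℝ) ((8 - 4*u)/3) = Set.Ioc 0 (2 - u) ∪ Set.Ioc (2 - u) ((8 - 4*u)/3) :=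
    (Set.Ioc_union_Ioc_eq_Ioc h0b hbB).symm
  have hset3 : Set.Ioi (0:ℝ) = Set.Ioc 0 ((8 - 4*u)/3) ∪ Set.Ioi ((8 - 4*u)/3) :=
    (Set.Ioc_union_Ioi_eq_Ioi h0B).symm
  have d2 : Disjoint (Set.Ioc (0:ℝ) (2 - u)) (Set.Ioc (2 - u) ((8 - 4*u)/3)) :=
    Set.disjoint_left.2 fun x hx1 hx2 => absurd hx1.2 (not_le.2 hx2.1)
  have d3 : Disjoint (Set.Ioc (0:ℝ) ((8 - 4*u)/3)) (Set.Ioi ((8 - 4*u)/3)) :=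
    Set.disjoint_left.2 fun x hx1 hx2 => absurd hx1.2 (not_le.2 hx2)
  have jB : IntegrableOn (vol18 u) (Set.Ioc 0 ((8 - 4*u)/3)) := by
    rw [hset2]; exact j2.union j3
  rw [hset3, setIntegral_union d3 measurableSet_Ioi jB j4,
    hset2, setIntegral_union d2 measurableSet_Ioc j2 j3]
  rw [setIntegral_congr_fun measurableSet_Ioc hvb,
    setIntegral_congr_fun measurableSet_Ioc hvc,
    setIntegral_congr_fun measurableSet_Ioi hvd]
  rw [← intervalIntegral.integral_of_le h0b, ← intervalIntegral.integral_of_le hbB]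
  have e2 : ∫ v in (0:ℝ)..(2 - u), (12 - 4*v - 12*u - v^2/2 + 2*u*v + 3*u^2)
      = ∫ v in (0:ℝ)..(2 - u), ((12 - 12*u + 3*u^2) + (2*u - 4)*v + (-(1/2))*v^2 + 0*v^3) :=
    intervalIntegral.integral_congr fun v _ => by ring
  have e3 : ∫ v in (2 - u)..((8 - 4*u)/3), ((1/2)*(4*u + 3*v - 8)^2)
      = ∫ v in (2 - u)..((8 - 4*u)/3), ((8*u^2 - 32*u + 32) + (12*u - 24)*v + (9/2)*v^2 + 0*v^3) :=
    intervalIntegral.integral_congr fun v _ => by ring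
  rw [e2, e3, ipoly18, ipoly18, integral_zero]
  ring

theorem stmt_18 :
    (3/22 : ℝ) * ∫ u in (0:ℝ)..2, ∫ v in Set.Ioi (0:ℝ), vol18 u v = 65/66 := by
  set g : ℝ → ℝ := fun u => ∫ v in Set.Ioi (0:ℝ), vol18 u v with hg
  have hne : ∀ᵐ u : ℝ, u ≠ (1:ℝ) := by
    have hs : {u : ℝ | ¬ u ≠ 1} = {1} := by ext x; simp
    rw [ae_iff, hs]
    exact measure_singleton 1
  have hae1 : ∀ᵐ u : ℝ, u ∈ Set.uIoc (0:ℝ) 1 →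
      g u = 124/9 - 56/3*u + 22/3*u^2 - 5/9*u^3 := by
    filter_upwards [hne] with u hu1 hmem
    rw [Set.uIoc_of_le zero_le_one] at hmem
    exact inner18_1 hmem.1 (lt_of_le_of_ne hmem.2 hu1)
  have hae2 : ∀ᵐ u : ℝ, u ∈ Set.uIoc (1:ℝ) 2 →
      g u = 136/9 - 68/3*u + 34/3*u^2 - 17/9*u^3 := by
    refine Filter.Eventually.of_forall fun u hmem => ?_
    rw [Set.uIoc_of_le one_le_two] at hmem
    exact inner18_2 hmem.1 hmem.2
  have hp1 : IntervalIntegrable (fun u : ℝ => 124/9 - 56/3*u + 22/3*u^2 - 5/9*u^3) volume 0 1 :=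
    (by fun_prop : Continuous fun u : ℝ => 124/9 - 56/3*u + 22/3*u^2 - 5/9*u^3).intervalIntegrable 0 1
  have hp2 : IntervalIntegrable (fun u : ℝ => 136/9 - 68/3*u + 34/3*u^2 - 17/9*u^3) volume 1 2 :=
    (by fun_prop : Continuous fun u : ℝ => 136/9 - 68/3*u + 34/3*u^2 - 17/9*u^3).intervalIntegrable 1 2
  have hi1 : IntervalIntegrable g volume 0 1 := by
    rw [intervalIntegrable_iff]
    refine (intervalIntegrable_iff.mp hp1).congr ?_
    rw [Filter.EventuallyEq, ae_restrict_iff' measurableSet_uIoc]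
    filter_upwards [hae1] with u hu hmem
    exact (hu hmem).symm
  have hi2 : IntervalIntegrable g volume 1 2 := by
    rw [intervalIntegrable_iff]
    refine (intervalIntegrable_iff.mp hp2).congr ?_
    rw [Filter.EventuallyEq, ae_restrict_iff' measurableSet_uIoc]
    filter_upwards [hae2] with u hu hmem
    exact (hu hmem).symm
  have hsplit : ∫ u in (0:ℝ)..2, g u = (∫ u in (0:ℝ)..1, g u) + ∫ u in (1:ℝ)..2, g u :=
    (intervalIntegral.integral_add_adjacent_intervals hi1 hi2).symm
  rw [hsplit, intervalIntegral.integral_congr_ae hae1, intervalIntegral.integral_congr_ae hae2]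
  have e1 : ∫ u in (0:ℝ)..1, (124/9 - 56/3*u + 22/3*u^2 - 5/9*u^3)
      = ∫ u in (0:ℝ)..1, ((124/9) + (-(56/3))*u + (22/3)*u^2 + (-(5/9))*u^3) :=
    intervalIntegral.integral_congr fun u _ => by ring
  have e2 : ∫ u in (1:ℝ)..2, (136/9 - 68/3*u + 34/3*u^2 - 17/9*u^3)
      = ∫ u in (1:ℝ)..2, ((136/9) + (-(68/3))*u + (34/3)*u^2 + (-(17/9))*u^3) :=
    intervalIntegral.integral_congr fun u _ => by ring
  rw [e1, e2, ipoly18, ipoly18]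
  norm_num
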